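/- Let τ be a triangular partition with slope parameters t⁻ = max over cells c of leg(c)/(arm(c)+leg(c)+1) and t⁺ analogous with leg(c)+1 in the numerator. Let c⁻ be the rightmost cell of τ maximizing t⁻·a + (1−t⁻)·b over cells (a,b) ∈ τ, and c⁺ the uppermost cell maximizing t⁺·a + (1−t⁺)·b. Then: if c⁻ = c⁺, this is the unique removable cell of τ; if c⁻ ≠ c⁺, both c⁻ and c⁺ are removable. -/

import Mathlib

open Set

/-- The positive quadrant of lattice points, representing ℕ² in the paper. -/
def posQuad : Set (ℕ × ℕ) := {c | 1 ≤ c.1 ∧ 1 ≤ c.2}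

/-- Embedding of lattice cells into the real plane. -/
noncomputable def toR2 (c : ℕ × ℕ) : ℝ × ℝ := ((c.1 : ℝ), (c.2 : ℝ))

/-- A set of cells is triangular if it consists exactly of the points of ℕ²
lying weakly below some line x/r + y/s = 1 with r, s > 0. -/
def IsTriangularSet (S : Set (ℕ × ℕ)) : Prop :=
  ∃ r s : ℝ, 0 < r ∧ 0 < s ∧
    S = {c : ℕ × ℕ | 1 ≤ c.1 ∧ 1 ≤ c.2 ∧ (c.1 : ℝ) / r + (c.2 : ℝ) / s ≤ 1}

/-- `S` is the Ferrers diagram of an integer partition. -/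
def IsPartitionSet (S : Set (ℕ × ℕ)) : Prop :=
  S.Finite ∧ S ⊆ posQuad ∧
    ∀ c ∈ S, ∀ a b : ℕ, 1 ≤ a → a ≤ c.1 → 1 ≤ b → b ≤ c.2 → (a, b) ∈ S

/-- A cell is removable if deleting it yields a triangular partition. -/
def RemovableCell (S : Set (ℕ × ℕ)) (c : ℕ × ℕ) : Prop :=
  c ∈ S ∧ IsTriangularSet (S \ {c})

/-- A cell of the complement is addable if adjoining it yields a triangular partition. -/
def AddableCell (S : Set (ℕ × ℕ)) (c : ℕ × ℕ) : Prop :=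
  c ∈ posQuad \ S ∧ IsTriangularSet (insert c S)

/-- Arm length of a cell: number of cells of `S` strictly to its right in its row. -/
noncomputable def armS (S : Set (ℕ × ℕ)) (c : ℕ × ℕ) : ℕ :=
  {a : ℕ | (a, c.2) ∈ S ∧ c.1 < a}.ncard

/-- Leg length of a cell: number of cells of `S` strictly above it in its column. -/
noncomputable def legS (S : Set (ℕ × ℕ)) (c : ℕ × ℕ) : ℕ :=
  {b : ℕ | (c.1, b) ∈ S ∧ c.2 < b}.ncard

/-! ### Auxiliary machinery -/

/-- The linear functional `t x + (1-t) y`. -/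
noncomputable def fw (t : ℝ) (c : ℕ × ℕ) : ℝ := t * (c.1 : ℝ) + (1 - t) * (c.2 : ℝ)

/-- The set of positive lattice points weakly below the line `t x + (1-t) y = M`. -/
def cutSet (t M : ℝ) : Set (ℕ × ℕ) := {c : ℕ × ℕ | 1 ≤ c.1 ∧ 1 ≤ c.2 ∧ fw t c ≤ M}

lemma nat_interval {T : Set ℕ} (hT : T.Finite) (u : ℕ)
    (h1 : ∀ a ∈ T, u < a) (h2 : ∀ a ∈ T, ∀ b, u < b → b ≤ a → b ∈ T) :
    T = Set.Ioc u (u + T.ncard) := by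
  rcases T.eq_empty_or_nonempty with h | h
  · simp [h]
  · obtain ⟨m, hm, hmax⟩ : ∃ m ∈ T, ∀ b ∈ T, id m ≤ id b → id m = id b := by
      obtain ⟨m, hm, hm'⟩ := T.exists_max_image id hT h
      exact ⟨m, hm, fun b hb hle => le_antisymm hle (hm' b hb)⟩
    have hTm : T = Set.Ioc u m := by
      ext b
      constructor
      · intro hb
        refine ⟨h1 b hb, ?_⟩
        rcases le_total b m with h' | h'
        · exact h'
        · exact (hmax b hb h').symm.le
      · intro hb
        exact h2 m hm b hb.1 hb.2
    rw [hTm]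
    have hcard : (Set.Ioc u m).ncard = m - u := by
      rw [← Finset.coe_Ioc, Set.ncard_coe_finset, Nat.card_Ioc]
    rw [hcard, Nat.add_sub_cancel' (h1 m hm).le]

lemma tri_empty : IsTriangularSet (∅ : Set (ℕ × ℕ)) := by
  refine ⟨1/2, 1/2, by norm_num, by norm_num, ?_⟩
  ext c
  simp only [Set.mem_empty_iff_false, Set.mem_setOf_eq, false_iff, not_and]
  intro h1 h2
  have c1 : (1:ℝ) ≤ (c.1:ℝ) := by exact_mod_cast h1
  have c2 : (1:ℝ) ≤ (c.2:ℝ) := by exact_mod_cast h2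
  have e1 : (c.1:ℝ)/(1/2) = 2*(c.1:ℝ) := by ring
  have e2 : (c.2:ℝ)/(1/2) = 2*(c.2:ℝ) := by ring
  rw [e1, e2]
  intro h
  linarith

lemma tri_cut {S : Set (ℕ × ℕ)} (h : IsTriangularSet S) :
    ∃ t M : ℝ, 0 < t ∧ t < 1 ∧ S = cutSet t M := by
  obtain ⟨r, s, hr, hs, hSet⟩ := h
  have hrs : 0 < r + s := by linarith
  refine ⟨s/(r+s), r*s/(r+s), by positivity, ?_, ?_⟩
  · rw [div_lt_one hrs]; linarith
  · rw [hSet]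
    ext c
    simp only [cutSet, Set.mem_setOf_eq, fw]
    refine and_congr_right fun _ => and_congr_right fun _ => ?_
    have h1 : 1 - s/(r+s) = r/(r+s) := by field_simp; ring
    rw [div_add_div _ _ hr.ne' hs.ne', div_le_one (by positivity), h1,
      div_mul_eq_mul_div, div_mul_eq_mul_div, ← add_div,
      div_le_div_iff₀ hrs (by positivity)]
    constructor <;> intro h' <;> nlinarith [h', hrs]

lemma cut_tri {t M : ℝ} (ht0 : 0 < t) (ht1 : t < 1) : IsTriangularSet (cutSet t M) := by
  rcases le_or_gt M 0 with hM | hM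
  · have hempty : cutSet t M = ∅ := by
      ext c
      simp only [cutSet, Set.mem_setOf_eq, Set.mem_empty_iff_false, iff_false, not_and]
      intro h1 h2
      have c1 : (1:ℝ) ≤ (c.1:ℝ) := by exact_mod_cast h1
      have c2 : (1:ℝ) ≤ (c.2:ℝ) := by exact_mod_cast h2
      simp only [fw]
      intro h
      nlinarith [mul_le_mul_of_nonneg_left c1 ht0.le,
        mul_le_mul_of_nonneg_left c2 (by linarith : (0:ℝ) ≤ 1 - t)]
    rw [hempty]; exact tri_empty
  · refine ⟨M/t, M/(1-t), by positivity, div_pos hM (by linarith), ?_⟩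
    ext c
    simp only [cutSet, Set.mem_setOf_eq, fw]
    refine and_congr_right fun _ => and_congr_right fun _ => ?_
    rw [div_div_eq_mul_div, div_div_eq_mul_div, ← add_div, div_le_one hM]
    constructor <;> intro h' <;> linarith

lemma cutSet_pos {t M : ℝ} : cutSet t M ⊆ posQuad := fun _ hc => ⟨hc.1, hc.2.1⟩

lemma cutSet_down {t M : ℝ} (ht0 : 0 < t) (ht1 : t < 1) :
    ∀ e ∈ cutSet t M, ∀ x y : ℕ, 1 ≤ x → x ≤ e.1 → 1 ≤ y → y ≤ e.2 → (x, y) ∈ cutSet t M := by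
  rintro e ⟨he1, he2, he3⟩ x y hx hxe hy hye
  refine ⟨hx, hy, le_trans ?_ he3⟩
  have h1 : (x:ℝ) ≤ (e.1:ℝ) := by exact_mod_cast hxe
  have h2 : (y:ℝ) ≤ (e.2:ℝ) := by exact_mod_cast hye
  simp only [fw]
  nlinarith [mul_le_mul_of_nonneg_left h1 ht0.le,
    mul_le_mul_of_nonneg_left h2 (by linarith : (0:ℝ) ≤ 1 - t)]

lemma cutSet_finite {t M : ℝ} (ht0 : 0 < t) (ht1 : t < 1) : (cutSet t M).Finite := by
  apply Set.Finite.subset (Set.finite_Icc ((0,0) : ℕ × ℕ) ((⌈M/t⌉₊, ⌈M/(1-t)⌉₊) : ℕ × ℕ))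
  rintro c ⟨h1, h2, h3⟩
  simp only [Set.mem_Icc, Prod.le_def]
  refine ⟨⟨Nat.zero_le _, Nat.zero_le _⟩, ?_, ?_⟩
  · have hc : (c.1:ℝ) ≤ M/t := by
      rw [le_div_iff₀ ht0]
      have hy : (0:ℝ) ≤ (c.2:ℝ) := Nat.cast_nonneg _
      simp only [fw] at h3
      nlinarith [mul_nonneg (by linarith : (0:ℝ) ≤ 1-t) hy]
    have := hc.trans (Nat.le_ceil (M/t))
    exact_mod_cast this
  · have hc : (c.2:ℝ) ≤ M/(1-t) := by
      rw [le_div_iff₀ (by linarith : (0:ℝ) < 1-t)]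
      have hy : (0:ℝ) ≤ (c.1:ℝ) := Nat.cast_nonneg _
      simp only [fw] at h3
      nlinarith [mul_nonneg ht0.le hy]
    have := hc.trans (Nat.le_ceil (M/(1-t)))
    exact_mod_cast this
lemma arm_facts {S : Set (ℕ × ℕ)} (hfin : S.Finite) (hpos : S ⊆ posQuad)
    (hdown : ∀ e ∈ S, ∀ x y : ℕ, 1 ≤ x → x ≤ e.1 → 1 ≤ y → y ≤ e.2 → (x, y) ∈ S)
    {e : ℕ × ℕ} (he : e ∈ S) :
    (∀ k ≤ armS S e, (e.1 + k, e.2) ∈ S) ∧ (e.1 + armS S e + 1, e.2) ∉ S := by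
  have he1 : 1 ≤ e.1 := (hpos he).1
  have he2 : 1 ≤ e.2 := (hpos he).2
  set T : Set ℕ := {a : ℕ | (a, e.2) ∈ S ∧ e.1 < a} with hT
  have harm : armS S e = T.ncard := rfl
  have hTfin : T.Finite := by
    apply Set.Finite.subset (Set.Finite.preimage (f := fun a : ℕ => (a, e.2)) ?_ hfin)
    · intro a ha; exact ha.1
    · intro a _ b _ hab
      exact (Prod.ext_iff.1 hab).1
  have hkey : T = Set.Ioc e.1 (e.1 + armS S e) := by
    rw [harm]
    exact nat_interval hTfin e.1 (fun a ha => ha.2)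
      (fun a ha b hb1 hb2 => ⟨hdown (a, e.2) ha.1 b e.2 (by omega) hb2 he2 le_rfl, hb1⟩)
  constructor
  · intro k hk
    rcases Nat.eq_zero_or_pos k with rfl | hk0
    · simpa using he
    · have hmem : e.1 + k ∈ T := by
        rw [hkey]; exact ⟨by omega, by omega⟩
      exact hmem.1
  · intro hmem
    have h2 : e.1 + armS S e + 1 ∈ T := ⟨hmem, by omega⟩
    rw [hkey] at h2
    simp only [Set.mem_Ioc] at h2
    omega

lemma leg_facts {S : Set (ℕ × ℕ)} (hfin : S.Finite) (hpos : S ⊆ posQuad)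
    (hdown : ∀ e ∈ S, ∀ x y : ℕ, 1 ≤ x → x ≤ e.1 → 1 ≤ y → y ≤ e.2 → (x, y) ∈ S)
    {e : ℕ × ℕ} (he : e ∈ S) :
    (∀ k ≤ legS S e, (e.1, e.2 + k) ∈ S) ∧ (e.1, e.2 + legS S e + 1) ∉ S := by
  have he1 : 1 ≤ e.1 := (hpos he).1
  have he2 : 1 ≤ e.2 := (hpos he).2
  set T : Set ℕ := {b : ℕ | (e.1, b) ∈ S ∧ e.2 < b} with hT
  have hleg : legS S e = T.ncard := rfl
  have hTfin : T.Finite := by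
    apply Set.Finite.subset (Set.Finite.preimage (f := fun b : ℕ => (e.1, b)) ?_ hfin)
    · intro b hb; exact hb.1
    · intro a _ b _ hab
      exact (Prod.ext_iff.1 hab).2
  have hkey : T = Set.Ioc e.2 (e.2 + legS S e) := by
    rw [hleg]
    exact nat_interval hTfin e.2 (fun a ha => ha.2)
      (fun a ha b hb1 hb2 => ⟨hdown (e.1, a) ha.1 e.1 b he1 le_rfl (by omega) hb2, hb1⟩)
  constructor
  · intro k hk
    rcases Nat.eq_zero_or_pos k with rfl | hk0
    · simpa using he
    · have hmem : e.2 + k ∈ T := by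
        rw [hkey]; exact ⟨by omega, by omega⟩
      exact hmem.1
  · intro hmem
    have h2 : e.2 + legS S e + 1 ∈ T := ⟨hmem, by omega⟩
    rw [hkey] at h2
    simp only [Set.mem_Ioc] at h2
    omega

lemma slope_bounds {t M : ℝ} (ht0 : 0 < t) (ht1 : t < 1) {e : ℕ × ℕ}
    (he : e ∈ cutSet t M) :
    (legS (cutSet t M) e : ℝ) / ((armS (cutSet t M) e : ℝ) + (legS (cutSet t M) e : ℝ) + 1) < t ∧
    t < ((legS (cutSet t M) e : ℝ) + 1) /
      ((armS (cutSet t M) e : ℝ) + (legS (cutSet t M) e : ℝ) + 1) := by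
  obtain ⟨hrow, hrow'⟩ := arm_facts (cutSet_finite ht0 ht1) cutSet_pos (cutSet_down ht0 ht1) he
  obtain ⟨hcol, hcol'⟩ := leg_facts (cutSet_finite ht0 ht1) cutSet_pos (cutSet_down ht0 ht1) he
  set a := armS (cutSet t M) e with ha
  set l := legS (cutSet t M) e with hl
  have he1 : 1 ≤ e.1 := he.1
  have he2 : 1 ≤ e.2 := he.2.1
  have h1 : M < fw t (e.1 + a + 1, e.2) := by
    by_contra h
    push_neg at h
    exact hrow' ⟨by omega, he2, h⟩
  have h2 : fw t (e.1, e.2 + l) ≤ M := (hcol l le_rfl).2.2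
  have h3 : fw t (e.1 + a, e.2) ≤ M := (hrow a le_rfl).2.2
  have h4 : M < fw t (e.1, e.2 + l + 1) := by
    by_contra h
    push_neg at h
    exact hcol' ⟨he1, by omega, h⟩
  have hd : (0:ℝ) < (a:ℝ) + (l:ℝ) + 1 := by positivity
  simp only [fw] at h1 h2 h3 h4
  push_cast at h1 h2 h3 h4
  constructor
  · rw [div_lt_iff₀ hd]
    nlinarith [h1, h2]
  · rw [lt_div_iff₀ hd]
    nlinarith [h3, h4]
lemma sep {S : Set (ℕ × ℕ)} (hfin : S.Finite) (hpos : S ⊆ posQuad)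
    (hdown : ∀ e ∈ S, ∀ x y : ℕ, 1 ≤ x → x ≤ e.1 → 1 ≤ y → y ≤ e.2 → (x, y) ∈ S)
    {t : ℝ} (ht0 : 0 < t) (ht1 : t < 1)
    (hub : ∀ e ∈ S, (legS S e : ℝ) < t * ((armS S e : ℝ) + (legS S e : ℝ) + 1))
    (hlb : ∀ e ∈ S, t * ((armS S e : ℝ) + (legS S e : ℝ) + 1) < (legS S e : ℝ) + 1)
    {d : ℕ × ℕ} (hd1 : 1 ≤ d.1) (hd2 : 1 ≤ d.2) (hdS : d ∉ S) :
    ∀ e ∈ S, fw t e < fw t d := by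
  intro e he
  have he1 : 1 ≤ e.1 := (hpos he).1
  have he2 : 1 ≤ e.2 := (hpos he).2
  have h1t : (0:ℝ) ≤ 1 - t := by linarith
  rcases le_or_gt d.1 e.1 with hx | hx <;> rcases le_or_gt d.2 e.2 with hy | hy
  · -- d ≤ e componentwise : contradiction
    exact absurd (by simpa using hdown e he d.1 d.2 hd1 hx hd2 hy) hdS
  · -- d.1 ≤ e.1, e.2 < d.2 : use the cell g = (d.1, e.2)
    have hg : (d.1, e.2) ∈ S := hdown e he d.1 e.2 hd1 hx he2 le_rfl
    obtain ⟨hrow, hrow'⟩ := arm_facts hfin hpos hdown hg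
    obtain ⟨hcol, hcol'⟩ := leg_facts hfin hpos hdown hg
    set a := armS S (d.1, e.2) with ha
    set l := legS S (d.1, e.2) with hl
    have claim1 : e.1 ≤ d.1 + a := by
      by_contra hcon
      push_neg at hcon
      exact hrow' (hdown e he (d.1 + a + 1) e.2 (by omega) (by omega) he2 le_rfl)
    have claim2 : e.2 + l + 1 ≤ d.2 := by
      by_contra hcon
      push_neg at hcon
      have hmem := hcol (d.2 - e.2) (by omega)
      have heq : e.2 + (d.2 - e.2) = d.2 := by omega
      rw [heq] at hmem
      exact hdS hmem
    have hb := hlb (d.1, e.2) hg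
    rw [← ha, ← hl] at hb
    have hc1 : (e.1:ℝ) ≤ (d.1:ℝ) + (a:ℝ) := by exact_mod_cast claim1
    have hc2 : (e.2:ℝ) + (l:ℝ) + 1 ≤ (d.2:ℝ) := by exact_mod_cast claim2
    simp only [fw]
    nlinarith [mul_le_mul_of_nonneg_left hc1 ht0.le, mul_le_mul_of_nonneg_left hc2 h1t, hb]
  · -- e.1 < d.1, d.2 ≤ e.2 : use the cell g = (e.1, d.2)
    have hg : (e.1, d.2) ∈ S := hdown e he e.1 d.2 he1 le_rfl hd2 hy
    obtain ⟨hrow, hrow'⟩ := arm_facts hfin hpos hdown hg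
    obtain ⟨hcol, hcol'⟩ := leg_facts hfin hpos hdown hg
    set a := armS S (e.1, d.2) with ha
    set l := legS S (e.1, d.2) with hl
    have claim1 : e.1 + a + 1 ≤ d.1 := by
      by_contra hcon
      push_neg at hcon
      have hmem := hrow (d.1 - e.1) (by omega)
      have heq : e.1 + (d.1 - e.1) = d.1 := by omega
      rw [heq] at hmem
      exact hdS hmem
    have claim2 : e.2 ≤ d.2 + l := by
      by_contra hcon
      push_neg at hcon
      exact hcol' (hdown e he e.1 (d.2 + l + 1) he1 le_rfl (by omega) (by omega))
    have hb := hub (e.1, d.2) hg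
    rw [← ha, ← hl] at hb
    have hc1 : (e.1:ℝ) + (a:ℝ) + 1 ≤ (d.1:ℝ) := by exact_mod_cast claim1
    have hc2 : (e.2:ℝ) ≤ (d.2:ℝ) + (l:ℝ) := by exact_mod_cast claim2
    simp only [fw]
    nlinarith [mul_le_mul_of_nonneg_left hc1 ht0.le, mul_le_mul_of_nonneg_left hc2 h1t, hb]
  · -- e.1 < d.1, e.2 < d.2
    have hc1 : (e.1:ℝ) + 1 ≤ (d.1:ℝ) := by exact_mod_cast hx
    have hc2 : (e.2:ℝ) + 1 ≤ (d.2:ℝ) := by exact_mod_cast hy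
    simp only [fw]
    nlinarith [mul_le_mul_of_nonneg_left hc1 ht0.le, mul_le_mul_of_nonneg_left hc2 h1t]

lemma perturb {α : Type*} (F : Finset α) (φ β : α → ℝ) {t0 T : ℝ} (hT : t0 < T)
    (h : ∀ e ∈ F, φ e < 0 ∨ (φ e ≤ 0 ∧ β e < 0)) :
    ∃ t, t0 < t ∧ t < T ∧ ∀ e ∈ F, φ e + (t - t0) * β e < 0 := by
  classical
  rcases F.eq_empty_or_nonempty with rfl | hF
  · exact ⟨(t0 + T)/2, by linarith, by linarith, by simp⟩
  · set δf : α → ℝ := fun e => if φ e < 0 then -φ e / (|β e| + 1) else T - t0 with hδf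
    have hδpos : ∀ e ∈ F, 0 < δf e := by
      intro e he
      by_cases hc : φ e < 0
      · simp only [hδf, if_pos hc]
        exact div_pos (by linarith) (by positivity)
      · simp only [hδf, if_neg hc]
        linarith
    set m := (F.image δf).min' (hF.image δf) with hm
    have hmpos : 0 < m := by
      obtain ⟨e, he, heq⟩ := Finset.mem_image.1 ((F.image δf).min'_mem (hF.image δf))
      rw [hm, ← heq]
      exact hδpos e he
    have hmle : ∀ e ∈ F, m ≤ δf e := fun e he =>
      Finset.min'_le _ _ (Finset.mem_image_of_mem δf he)
    refine ⟨t0 + min m (T - t0)/2, by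
        have := lt_min hmpos (by linarith : (0:ℝ) < T - t0)
        linarith, by
        have := min_le_right m (T - t0)
        linarith, ?_⟩
    intro e he
    have hde : t0 + min m (T - t0)/2 - t0 < δf e := by
      have h1 := min_le_left m (T - t0)
      have := hmle e he
      have := lt_min hmpos (by linarith : (0:ℝ) < T - t0)
      nlinarith
    have htpos : (0:ℝ) < t0 + min m (T - t0)/2 - t0 := by
      have := lt_min hmpos (by linarith : (0:ℝ) < T - t0)
      linarith
    set s := t0 + min m (T - t0)/2 - t0 with hs
    rcases h e he with h1 | ⟨h1, h2⟩
    · have hδ : δf e = -φ e / (|β e| + 1) := if_pos h1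
      rw [hδ] at hde
      have habs : (0:ℝ) ≤ |β e| := abs_nonneg _
      have hkey : s * (|β e| + 1) < -φ e := (lt_div_iff₀ (by positivity)).1 hde
      have hβ : s * β e ≤ s * |β e| := mul_le_mul_of_nonneg_left (le_abs_self _) htpos.le
      nlinarith
    · nlinarith [mul_pos htpos (neg_pos.2 h2)]
set_option maxHeartbeats 2000000 in
theorem stmt4 (S : Set (ℕ × ℕ)) (hS : IsTriangularSet S) (hne : S.Nonempty)
    (tminus tplus : ℝ)
    (htm : IsGreatest
      {x : ℝ | ∃ c ∈ S, x = (legS S c : ℝ) / ((armS S c : ℝ) + (legS S c : ℝ) + 1)} tminus)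
    (htp : IsLeast
      {x : ℝ | ∃ c ∈ S, x = ((legS S c : ℝ) + 1) / ((armS S c : ℝ) + (legS S c : ℝ) + 1)} tplus)
    (cm cp : ℕ × ℕ)
    (hcm : cm ∈ S ∧
      (∀ c ∈ S, tminus * (c.1 : ℝ) + (1 - tminus) * (c.2 : ℝ) ≤
        tminus * (cm.1 : ℝ) + (1 - tminus) * (cm.2 : ℝ)) ∧
      ∀ c ∈ S, tminus * (c.1 : ℝ) + (1 - tminus) * (c.2 : ℝ) =
        tminus * (cm.1 : ℝ) + (1 - tminus) * (cm.2 : ℝ) → c.1 ≤ cm.1)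
    (hcp : cp ∈ S ∧
      (∀ c ∈ S, tplus * (c.1 : ℝ) + (1 - tplus) * (c.2 : ℝ) ≤
        tplus * (cp.1 : ℝ) + (1 - tplus) * (cp.2 : ℝ)) ∧
      ∀ c ∈ S, tplus * (c.1 : ℝ) + (1 - tplus) * (c.2 : ℝ) =
        tplus * (cp.1 : ℝ) + (1 - tplus) * (cp.2 : ℝ) → c.2 ≤ cp.2) :
    (cm = cp → RemovableCell S cm ∧ ∀ c, RemovableCell S c → c = cm) ∧
    (cm ≠ cp → RemovableCell S cm ∧ RemovableCell S cp) := by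
  classical
  obtain ⟨hcmS, hcmMax, hcmTie⟩ := hcm
  obtain ⟨hcpS, hcpMax, hcpTie⟩ := hcp
  obtain ⟨t1, M1, ht10, ht11, hScut⟩ := tri_cut hS
  have hfin : S.Finite := by rw [hScut]; exact cutSet_finite ht10 ht11
  have hpos : S ⊆ posQuad := by rw [hScut]; exact cutSet_pos
  have hdown : ∀ e ∈ S, ∀ x y : ℕ, 1 ≤ x → x ≤ e.1 → 1 ≤ y → y ≤ e.2 → (x, y) ∈ S := by
    rw [hScut]; exact cutSet_down ht10 ht11
  -- any exact cut of S has slope strictly between tminus and tplus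
  have hslopeS : ∀ t M : ℝ, 0 < t → t < 1 → S = cutSet t M → tminus < t ∧ t < tplus := by
    intro t M h0 h1 hEq
    obtain ⟨c0, hc0, heq0⟩ := htm.1
    obtain ⟨c1, hc1, heq1⟩ := htp.1
    rw [hEq] at hc0 hc1 heq0 heq1
    constructor
    · rw [heq0]; exact (slope_bounds h0 h1 hc0).1
    · rw [heq1]; exact (slope_bounds h0 h1 hc1).2
  obtain ⟨hmt1, ht1p⟩ := hslopeS t1 M1 ht10 ht11 hScut
  have hmp : tminus < tplus := hmt1.trans ht1p
  have hmm0 : 0 ≤ tminus := by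
    obtain ⟨c0, hc0, heq0⟩ := htm.1
    rw [heq0]; positivity
  have hp1 : tplus ≤ 1 := by
    obtain ⟨c1, hc1, heq1⟩ := htp.1
    rw [heq1, div_le_one (by positivity)]
    have : (0:ℝ) ≤ (armS S c1 : ℝ) := Nat.cast_nonneg _
    linarith
  have htm_ub : ∀ e ∈ S, (legS S e : ℝ) ≤ tminus * ((armS S e : ℝ) + (legS S e : ℝ) + 1) := by
    intro e he
    have h := htm.2 ⟨e, he, rfl⟩
    rwa [div_le_iff₀ (by positivity)] at h
  have htp_lb : ∀ e ∈ S, tplus * ((armS S e : ℝ) + (legS S e : ℝ) + 1) ≤ (legS S e : ℝ) + 1 := by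
    intro e he
    have h := htp.2 ⟨e, he, rfl⟩
    rwa [le_div_iff₀ (by positivity)] at h
  have hsep : ∀ t' : ℝ, tminus < t' → t' < tplus →
      ∀ d : ℕ × ℕ, 1 ≤ d.1 → 1 ≤ d.2 → d ∉ S → ∀ e ∈ S, fw t' e < fw t' d := by
    intro t' h1 h2 d hd1 hd2 hdS
    have ht'0 : 0 < t' := lt_of_le_of_lt hmm0 h1
    have ht'1 : t' < 1 := lt_of_lt_of_le h2 hp1
    refine sep hfin hpos hdown ht'0 ht'1 ?_ ?_ hd1 hd2 hdS
    · intro e he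
      have h := htm_ub e he
      have hpos' : (0:ℝ) < (armS S e : ℝ) + (legS S e : ℝ) + 1 := by positivity
      nlinarith [mul_lt_mul_of_pos_right h1 hpos']
    · intro e he
      have h := htp_lb e he
      have hpos' : (0:ℝ) < (armS S e : ℝ) + (legS S e : ℝ) + 1 := by positivity
      nlinarith [mul_lt_mul_of_pos_right h2 hpos']
  -- a cell which strictly maximizes fw t' for some slope between tminus and tplus is removable
  have hremof : ∀ c ∈ S, ∀ t' : ℝ, tminus < t' → t' < tplus →
      (∀ e ∈ S, e ≠ c → fw t' e < fw t' c) → RemovableCell S c := by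
    intro c hc t' h1 h2 hmax
    have ht'0 : 0 < t' := lt_of_le_of_lt hmm0 h1
    have ht'1 : t' < 1 := lt_of_lt_of_le h2 hp1
    refine ⟨hc, ?_⟩
    rcases Set.eq_empty_or_nonempty (S \ {c}) with hD | hD
    · rw [hD]; exact tri_empty
    · have hDfin : (S \ {c}).Finite := hfin.subset diff_subset
      obtain ⟨e0, he0, hmax0⟩ : ∃ e0 ∈ S \ {c}, ∀ b ∈ S \ {c}, fw t' e0 ≤ fw t' b → fw t' e0 = fw t' b := by
        obtain ⟨m, hm, hm'⟩ := (S \ {c}).exists_max_image (fw t') hDfin hD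
        exact ⟨m, hm, fun b hb hle => le_antisymm hle (hm' b hb)⟩
      have he0S : e0 ∈ S := he0.1
      have he0c : e0 ≠ c := he0.2
      have hmax0' : ∀ e ∈ S \ {c}, fw t' e ≤ fw t' e0 := by
        intro e heD
        rcases le_total (fw t' e) (fw t' e0) with h | h
        · exact h
        · exact (hmax0 e heD h).ge
      have key : S \ {c} = cutSet t' (fw t' e0) := by
        ext d
        constructor
        · intro hd
          exact ⟨(hpos hd.1).1, (hpos hd.1).2, hmax0' d hd⟩
        · rintro ⟨hd1, hd2, hd3⟩
          have hdc : d ≠ c := by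
            intro hcon
            have h5 := hmax e0 he0S he0c
            rw [hcon] at hd3
            linarith
          refine ⟨?_, hdc⟩
          by_contra hnot
          have := hsep t' h1 h2 d hd1 hd2 hnot e0 he0S
          linarith
      rw [key]
      exact cut_tri ht'0 ht'1
  -- every removable cell strictly maximizes fw t' for some slope between tminus and tplus
  have hDlem : ∀ c, RemovableCell S c →
      ∃ t' : ℝ, tminus < t' ∧ t' < tplus ∧ ∀ e ∈ S, e ≠ c → fw t' e < fw t' c := by
    rintro c ⟨hcS, htri⟩
    rcases Set.eq_empty_or_nonempty (S \ {c}) with hD | hD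
    · refine ⟨t1, hmt1, ht1p, ?_⟩
      intro e he hnec
      exact absurd (show e ∈ S \ {c} from ⟨he, hnec⟩) (by rw [hD]; exact Set.notMem_empty e)
    · obtain ⟨t2, M2, ht20, ht21, hDcut⟩ := tri_cut htri
      have hc1 : 1 ≤ c.1 := (hpos hcS).1
      have hc2 : 1 ≤ c.2 := (hpos hcS).2
      have E2c : M2 < fw t2 c := by
        have hnc : c ∉ cutSet t2 M2 := by
          rw [← hDcut]
          exact fun hmem => hmem.2 rfl
        by_contra hcon
        push_neg at hcon
        exact hnc ⟨hc1, hc2, hcon⟩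
      have E2e : ∀ e ∈ S, e ≠ c → fw t2 e ≤ M2 := by
        intro e he hnec
        have hmem : e ∈ cutSet t2 M2 := by rw [← hDcut]; exact ⟨he, hnec⟩
        exact hmem.2.2
      have E2d : ∀ d : ℕ × ℕ, 1 ≤ d.1 → 1 ≤ d.2 → d ∉ S → M2 < fw t2 d := by
        intro d h1 h2 h3
        have hnd : d ∉ cutSet t2 M2 := by
          rw [← hDcut]; exact fun hmem => h3 hmem.1
        by_contra hcon
        push_neg at hcon
        exact hnd ⟨h1, h2, hcon⟩
      have E1e : ∀ e ∈ S, fw t1 e ≤ M1 := by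
        intro e he
        rw [hScut] at he
        exact he.2.2
      have E1d : ∀ d : ℕ × ℕ, 1 ≤ d.1 → 1 ≤ d.2 → d ∉ S → M1 < fw t1 d := by
        intro d h1 h2 h3
        rw [hScut] at h3
        by_contra hcon
        push_neg at hcon
        exact h3 ⟨h1, h2, hcon⟩
      set g0 := fw t2 c - M2 with hg0
      set g1 := fw t1 c - M1 with hg1
      have hg0pos : 0 < g0 := by rw [hg0]; linarith
      have hg1np : g1 ≤ 0 := by rw [hg1]; have := E1e c hcS; linarith
      have hden : 0 < g0 - g1 := by linarith
      set θ := g0 / (g0 - g1) with hθ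
      have hθ0 : 0 < θ := div_pos hg0pos hden
      have hθ1 : θ ≤ 1 := by rw [hθ, div_le_one hden]; linarith
      have hkey : θ * (g0 - g1) = g0 := by rw [hθ]; field_simp
      set ts := (1-θ)*t2 + θ*t1 with hts
      set Ms := (1-θ)*M2 + θ*M1 with hMs
      have haff : ∀ (u : ℝ) (d : ℕ × ℕ),
          fw ((1-u)*t2 + u*t1) d = (1-u)*fw t2 d + u*fw t1 d := by
        intro u d; simp only [fw]; ring
      have hts0 : 0 < ts := by
        rw [hts]
        nlinarith [mul_nonneg (by linarith : (0:ℝ) ≤ 1-θ) ht20.le, mul_pos hθ0 ht10]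
      have hts1 : ts < 1 := by
        rw [hts]
        nlinarith [mul_nonneg (by linarith : (0:ℝ) ≤ 1-θ) (by linarith : (0:ℝ) ≤ 1-t2),
          mul_pos hθ0 (by linarith : (0:ℝ) < 1-t1)]
      have hcutS : S = cutSet ts Ms := by
        ext d
        constructor
        · intro hd
          refine ⟨(hpos hd).1, (hpos hd).2, ?_⟩
          rw [hts, haff, hMs]
          by_cases hdc : d = c
          · rw [hdc]
            have hring : (1-θ)*(fw t2 c) + θ*(fw t1 c) - ((1-θ)*M2 + θ*M1)
                = g0 - θ*(g0-g1) := by rw [hg0, hg1]; ring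
            linarith [hring, hkey]
          · have h2' := E2e d hd hdc
            have h1' := E1e d hd
            nlinarith [mul_le_mul_of_nonneg_left h2' (by linarith : (0:ℝ) ≤ 1-θ),
              mul_le_mul_of_nonneg_left h1' hθ0.le]
        · rintro ⟨h1', h2', h3'⟩
          by_contra hdS
          have ha := E1d d h1' h2' hdS
          have hb := E2d d h1' h2' hdS
          rw [hts, haff, hMs] at h3'
          nlinarith [mul_lt_mul_of_pos_left ha hθ0,
            mul_le_mul_of_nonneg_left hb.le (by linarith : (0:ℝ) ≤ 1-θ)]
      obtain ⟨htsm, htsp⟩ := hslopeS ts Ms hts0 hts1 hcutS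
      set ε := min (ts - tminus) (tplus - ts) with hε
      have hεpos : 0 < ε := lt_min (by linarith) (by linarith)
      set Δ := |t1 - t2| with hΔ
      have hΔ0 : 0 ≤ Δ := abs_nonneg _
      set δ := min θ (ε/(Δ+1)) / 2 with hδ
      have hδpos : 0 < δ := by
        rw [hδ]
        have := lt_min hθ0 (by positivity : (0:ℝ) < ε/(Δ+1))
        linarith
      have hδθ : δ ≤ θ/2 := by
        rw [hδ]
        have := min_le_left θ (ε/(Δ+1))
        linarith
      have hδε : δ ≤ ε/(Δ+1)/2 := by
        rw [hδ]
        have := min_le_right θ (ε/(Δ+1))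
        linarith
      set θ' := θ - δ with hθ'
      have hθ'0 : 0 < θ' := by rw [hθ']; linarith
      have hθ'1 : θ' ≤ 1 := by rw [hθ']; linarith
      set t' := (1-θ')*t2 + θ'*t1 with ht'
      have htdiff : t' - ts = δ*(t2 - t1) := by rw [ht', hts, hθ']; ring
      have habs : |t' - ts| < ε := by
        rw [htdiff, abs_mul, abs_of_pos hδpos, abs_sub_comm, ← hΔ]
        have h2 : δ * Δ ≤ (ε/(Δ+1)/2) * Δ := mul_le_mul_of_nonneg_right hδε hΔ0
        have h3 : (ε/(Δ+1)/2) * Δ < ε := by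
          rw [div_div, div_mul_eq_mul_div, div_lt_iff₀ (by positivity)]
          nlinarith
        linarith
      have ht'm : tminus < t' := by
        have h1 := min_le_left (ts - tminus) (tplus - ts)
        have h2 := (abs_lt.1 habs).1
        rw [← hε] at h1
        linarith
      have ht'p : t' < tplus := by
        have h1 := min_le_right (ts - tminus) (tplus - ts)
        have h2 := (abs_lt.1 habs).2
        rw [← hε] at h1
        linarith
      refine ⟨t', ht'm, ht'p, ?_⟩
      intro e he hnec
      have hA := E2e e he hnec
      have hB := E1e e he
      have hgoal1 : fw t' e ≤ (1-θ')*M2 + θ'*M1 := by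
        rw [ht', haff]
        nlinarith [mul_le_mul_of_nonneg_left hA (by linarith : (0:ℝ) ≤ 1-θ'),
          mul_le_mul_of_nonneg_left hB hθ'0.le]
      have hgoal2 : (1-θ')*M2 + θ'*M1 < fw t' c := by
        rw [ht', haff]
        have e1 : (1-θ')*(fw t2 c) + θ'*(fw t1 c) - ((1-θ')*M2 + θ'*M1)
            = g0 - θ'*(g0-g1) := by rw [hg0, hg1]; ring
        have e2 : θ'*(g0-g1) < θ*(g0-g1) := by
          apply mul_lt_mul_of_pos_right _ hden
          rw [hθ']; linarith
        linarith [e1, e2, hkey]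
      linarith
  -- cm is removable
  have hRm : RemovableCell S cm := by
    have htie : ∀ e ∈ S, e ≠ cm → fw tminus e = fw tminus cm →
        ((e.1:ℝ) - (e.2:ℝ)) - ((cm.1:ℝ) - (cm.2:ℝ)) < 0 := by
      intro e he hnee heq
      have h1 : e.1 ≤ cm.1 := hcmTie e he heq
      have h1m : (0:ℝ) < 1 - tminus := by linarith
      have h1' : e.1 < cm.1 := by
        rcases lt_or_eq_of_le h1 with h | h
        · exact h
        · exfalso
          have hx : (e.1:ℝ) = (cm.1:ℝ) := by exact_mod_cast h
          have hy : (1-tminus) * (e.2:ℝ) = (1-tminus) * (cm.2:ℝ) := by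
            simp only [fw] at heq; rw [hx] at heq; linarith
          have hy' : (e.2:ℝ) = (cm.2:ℝ) := mul_left_cancel₀ h1m.ne' hy
          have he2 : e.2 = cm.2 := by exact_mod_cast hy'
          exact hnee (Prod.ext h he2)
      have hc1 : (e.1:ℝ) < (cm.1:ℝ) := by exact_mod_cast h1'
      have h2 : (cm.2:ℝ) ≤ (e.2:ℝ) := by
        simp only [fw] at heq
        nlinarith [mul_nonneg hmm0 (by linarith : (0:ℝ) ≤ (cm.1:ℝ) - (e.1:ℝ))]
      linarith
    have hP : ∀ e ∈ (hfin.toFinset).erase cm,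
        (fw tminus e - fw tminus cm < 0) ∨
        (fw tminus e - fw tminus cm ≤ 0 ∧
          ((e.1:ℝ) - (e.2:ℝ)) - ((cm.1:ℝ) - (cm.2:ℝ)) < 0) := by
      intro e heF
      have heS : e ∈ S := hfin.mem_toFinset.1 (Finset.mem_of_mem_erase heF)
      have hene : e ≠ cm := Finset.ne_of_mem_erase heF
      have hle : fw tminus e ≤ fw tminus cm := hcmMax e heS
      rcases lt_or_eq_of_le hle with hlt | heq
      · exact Or.inl (by linarith)
      · exact Or.inr ⟨by linarith, htie e heS hene heq⟩
    obtain ⟨t', h1, h2, h3⟩ := perturb ((hfin.toFinset).erase cm)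
      (fun e => fw tminus e - fw tminus cm)
      (fun e => ((e.1:ℝ) - (e.2:ℝ)) - ((cm.1:ℝ) - (cm.2:ℝ))) hmp hP
    refine hremof cm hcmS t' h1 h2 ?_
    intro e he hnee
    have hmem : e ∈ (hfin.toFinset).erase cm :=
      Finset.mem_erase.2 ⟨hnee, hfin.mem_toFinset.2 he⟩
    have hval := h3 e hmem
    have hident : fw t' e - fw t' cm =
        (fw tminus e - fw tminus cm) +
          (t' - tminus)*(((e.1:ℝ) - (e.2:ℝ)) - ((cm.1:ℝ) - (cm.2:ℝ))) := by
      simp only [fw]; ring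
    linarith
  -- cp is removable
  have hRp : RemovableCell S cp := by
    have htp0 : 0 < tplus := lt_of_le_of_lt hmm0 hmp
    have htie : ∀ e ∈ S, e ≠ cp → fw tplus e = fw tplus cp →
        ((cp.1:ℝ) - (cp.2:ℝ)) - ((e.1:ℝ) - (e.2:ℝ)) < 0 := by
      intro e he hnee heq
      have h1 : e.2 ≤ cp.2 := hcpTie e he heq
      have h1' : e.2 < cp.2 := by
        rcases lt_or_eq_of_le h1 with h | h
        · exact h
        · exfalso
          have hy : (e.2:ℝ) = (cp.2:ℝ) := by exact_mod_cast h
          have hx : tplus * (e.1:ℝ) = tplus * (cp.1:ℝ) := by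
            simp only [fw] at heq; rw [hy] at heq; linarith
          have hx' : (e.1:ℝ) = (cp.1:ℝ) := mul_left_cancel₀ htp0.ne' hx
          have he1 : e.1 = cp.1 := by exact_mod_cast hx'
          exact hnee (Prod.ext he1 h)
      have hc2 : (e.2:ℝ) < (cp.2:ℝ) := by exact_mod_cast h1'
      have h2 : (cp.1:ℝ) ≤ (e.1:ℝ) := by
        simp only [fw] at heq
        nlinarith [mul_nonneg (by linarith : (0:ℝ) ≤ 1 - tplus)
          (by linarith : (0:ℝ) ≤ (cp.2:ℝ) - (e.2:ℝ))]
      linarith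
    have hP : ∀ e ∈ (hfin.toFinset).erase cp,
        (fw tplus e - fw tplus cp < 0) ∨
        (fw tplus e - fw tplus cp ≤ 0 ∧
          ((cp.1:ℝ) - (cp.2:ℝ)) - ((e.1:ℝ) - (e.2:ℝ)) < 0) := by
      intro e heF
      have heS : e ∈ S := hfin.mem_toFinset.1 (Finset.mem_of_mem_erase heF)
      have hene : e ≠ cp := Finset.ne_of_mem_erase heF
      have hle : fw tplus e ≤ fw tplus cp := hcpMax e heS
      rcases lt_or_eq_of_le hle with hlt | heq
      · exact Or.inl (by linarith)
      · exact Or.inr ⟨by linarith, htie e heS hene heq⟩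
    obtain ⟨u, h1, h2, h3⟩ := perturb ((hfin.toFinset).erase cp)
      (fun e => fw tplus e - fw tplus cp)
      (fun e => ((cp.1:ℝ) - (cp.2:ℝ)) - ((e.1:ℝ) - (e.2:ℝ)))
      (show -tplus < -tminus by linarith) hP
    have h1' : tminus < -u := by linarith
    have h2' : -u < tplus := by linarith
    refine hremof cp hcpS (-u) h1' h2' ?_
    intro e he hnee
    have hmem : e ∈ (hfin.toFinset).erase cp :=
      Finset.mem_erase.2 ⟨hnee, hfin.mem_toFinset.2 he⟩
    have hval := h3 e hmem
    have hident : fw (-u) e - fw (-u) cp =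
        (fw tplus e - fw tplus cp) +
          (u - (-tplus))*(((cp.1:ℝ) - (cp.2:ℝ)) - ((e.1:ℝ) - (e.2:ℝ))) := by
      simp only [fw]; ring
    linarith
  -- uniqueness when cm = cp
  have huniq : ∀ c, RemovableCell S c → cm = cp → c = cm := by
    intro c hrem hcc
    by_contra hnec
    obtain ⟨t', h1, h2, h3⟩ := hDlem c hrem
    have hlt : fw t' cm < fw t' c := h3 cm hcmS (fun h => hnec (h ▸ rfl))
    have A1 : fw tminus c ≤ fw tminus cm := hcmMax c hrem.1
    have A2 : fw tplus c ≤ fw tplus cp := hcpMax c hrem.1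
    rw [← hcc] at A2
    simp only [fw] at A1 A2 hlt
    nlinarith [mul_nonneg (by linarith : (0:ℝ) ≤ tplus - t') (sub_nonneg.2 A1),
      mul_nonneg (by linarith : (0:ℝ) ≤ t' - tminus) (sub_nonneg.2 A2),
      mul_pos (by linarith : (0:ℝ) < tplus - tminus) (sub_pos.2 hlt)]
  exact ⟨fun hcc => ⟨hRm, fun c hc => huniq c hc hcc⟩, fun _ => ⟨hRm, hRp⟩⟩
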